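/- Let V_β(r) = −(1/2)((λβ/4) sinh(r) + log cosh(r)). The local maximum b_β of V_β satisfies b_β = −λβ/4 + o(β²) and V_β(b_β) = O(β²) as β → 0. -/

import Mathlib

open Real Filter Asymptotics Topology

/-- The potential `V_β(r) = −(1/2)((λβ/4) sinh r + log cosh r)`. -/
noncomputable def Vpot (lam β r : ℝ) : ℝ :=
  -(1 / 2) * (lam * (β / 4) * Real.sinh r + Real.log (Real.cosh r))

lemma sinh_sub_self_cubic (x : ℝ) (hx : |x| ≤ 1) : |Real.sinh x - x| ≤ |x| ^ 3 := by
  have h1 := Real.exp_bound hx (by norm_num : 0 < 3)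
  have h2 := Real.exp_bound (x := -x) (by rwa [abs_neg]) (by norm_num : 0 < 3)
  simp [Finset.sum_range_succ, abs_neg] at h1 h2
  rw [Real.sinh_eq]
  have e1 : |Real.exp x - (1 + x + x ^ 2 / 2)| ≤ |x| ^ 3 * (2/9) := by
    convert h1 using 2 <;> norm_num [Nat.factorial]
  have e2 : |Real.exp (-x) - (1 - x + x ^ 2 / 2)| ≤ |x| ^ 3 * (2/9) := by
    convert h2 using 2 <;> norm_num [Nat.factorial] <;> ring
  rw [abs_le] at e1 e2 ⊢
  constructor <;> nlinarith [e1.1, e1.2, e2.1, e2.2]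

set_option maxHeartbeats 1000000 in
/-- The local maximum `b_β` of `V_β` satisfies `b_β = −λβ/4 + o(β²)` and
`V_β(b_β) = O(β²)` as `β → 0`. -/
theorem stmt_3 (lam : ℝ) (hlam : 0 < lam) (b : ℝ → ℝ)
    (hb : ∀ᶠ β in 𝓝[>] (0 : ℝ), IsLocalMax (Vpot lam β) (b β) ∧ |b β| ≤ 1) :
    ((fun β => b β - (-(lam * β / 4))) =o[𝓝[>] (0 : ℝ)] fun β => β ^ 2) ∧
      (fun β => Vpot lam β (b β)) =O[𝓝[>] (0 : ℝ)] fun β => β ^ 2 := by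
  set L := 𝓝[>] (0 : ℝ)
  set K : ℝ := lam * Real.cosh 1 ^ 2 / 4 with hK
  have hK0 : 0 < K := by positivity
  set C1 : ℝ := K ^ 3 + lam * K ^ 2 / 4 with hC1
  set C2 : ℝ := (lam * K / 4 + K ^ 2) / 2 with hC2
  clear_value K C1 C2
  have hβpos : ∀ᶠ β in L, 0 < β := eventually_mem_nhdsWithin
  have key : ∀ᶠ β in L, |b β - (-(lam * β / 4))| ≤ C1 * β ^ 3 ∧
      |Vpot lam β (b β)| ≤ C2 * β ^ 2 := by
    filter_upwards [hb, hβpos] with β hβ hβ0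
    obtain ⟨hmax, hr1⟩ := hβ
    set r := b β with hrdef
    set c : ℝ := lam * (β / 4) with hc
    have hc0 : 0 < c := by positivity
    clear_value r c
    have hcp : 0 < Real.cosh r := Real.cosh_pos r
    -- derivative vanishes at the local maximum
    have hV : Vpot lam β = fun x => -(1 / 2) * (c * Real.sinh x + Real.log (Real.cosh x)) := by
      funext x; rw [Vpot, hc]
    have hd : HasDerivAt (Vpot lam β)
        (-(1 / 2) * (c * Real.cosh r + Real.sinh r / Real.cosh r)) r := by
      rw [hV]
      have h1 : HasDerivAt (fun x => c * Real.sinh x) (c * Real.cosh r) r :=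
        (Real.hasDerivAt_sinh r).const_mul c
      have h2 : HasDerivAt (fun x => Real.log (Real.cosh x))
          (Real.sinh r / Real.cosh r) r :=
        (Real.hasDerivAt_cosh r).log hcp.ne'
      exact (h1.add h2).const_mul (-(1/2))
    have h0 : deriv (Vpot lam β) r = 0 := hmax.deriv_eq_zero
    rw [hd.deriv] at h0
    have h0' : c * Real.cosh r + Real.sinh r / Real.cosh r = 0 := by linarith
    have heq : Real.sinh r = -c * Real.cosh r ^ 2 := by
      field_simp at h0'
      nlinarith [h0']
    -- basic size bounds
    have hcosh1 : Real.cosh r ≤ Real.cosh 1 := by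
      rw [Real.cosh_le_cosh]; simpa using hr1
    have hsK : |Real.sinh r| ≤ K * β := by
      have h : |Real.sinh r| = c * Real.cosh r ^ 2 := by
        rw [heq, abs_mul, abs_neg, abs_of_pos hc0, abs_of_nonneg (by positivity)]
      have hcc : Real.cosh r ^ 2 ≤ Real.cosh 1 ^ 2 := by nlinarith [hcp.le]
      rw [h]
      calc c * Real.cosh r ^ 2 ≤ c * Real.cosh 1 ^ 2 :=
            mul_le_mul_of_nonneg_left hcc hc0.le
        _ = K * β := by rw [hK, hc]; ring
    have hrs : |r| ≤ |Real.sinh r| := by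
      rw [Real.abs_sinh]
      exact Real.self_le_sinh_iff.mpr (abs_nonneg r)
    have hrK : |r| ≤ K * β := hrs.trans hsK
    have hcube : |Real.sinh r - r| ≤ |r| ^ 3 := sinh_sub_self_cubic r hr1
    have hsq : Real.cosh r ^ 2 = Real.sinh r ^ 2 + 1 := by
      nlinarith [Real.cosh_sq r]
    have hs2 : Real.sinh r ^ 2 ≤ (K * β) ^ 2 := by
      nlinarith [sq_abs (Real.sinh r), abs_nonneg (Real.sinh r)]
    constructor
    · have h1 : r - (-(lam * β / 4)) = (r - Real.sinh r) + (Real.sinh r + c) := by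
        rw [hc]; ring
      have h2 : Real.sinh r + c = -c * Real.sinh r ^ 2 := by
        linear_combination heq - c * hsq
      rw [h1]
      calc |(r - Real.sinh r) + (Real.sinh r + c)|
          ≤ |r - Real.sinh r| + |Real.sinh r + c| := abs_add_le _ _
        _ ≤ |r| ^ 3 + c * Real.sinh r ^ 2 := by
            have e1 : |r - Real.sinh r| ≤ |r| ^ 3 := by rw [abs_sub_comm]; exact hcube
            have e2 : |Real.sinh r + c| = c * Real.sinh r ^ 2 := by
              rw [h2, abs_mul, abs_neg, abs_of_pos hc0, abs_of_nonneg (sq_nonneg _)]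
            linarith [e2.le, e2.ge]
        _ ≤ (K * β) ^ 3 + c * (K * β) ^ 2 := by
            have e3 : |r| ^ 3 ≤ (K * β) ^ 3 := by gcongr
            have e4 : c * Real.sinh r ^ 2 ≤ c * (K * β) ^ 2 :=
              mul_le_mul_of_nonneg_left hs2 hc0.le
            linarith
        _ = C1 * β ^ 3 := by rw [hC1, hc]; ring
    · have hlog0 : 0 ≤ Real.log (Real.cosh r) :=
        Real.log_nonneg (Real.one_le_cosh r)
      have hlog : Real.log (Real.cosh r) ≤ Real.sinh r ^ 2 := by
        have h5 := Real.log_le_sub_one_of_pos hcp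
        nlinarith [Real.one_le_cosh r, hsq, h5]
      calc |Vpot lam β r|
          = (1/2) * |c * Real.sinh r + Real.log (Real.cosh r)| := by
            rw [hV]; rw [abs_mul]; norm_num
        _ ≤ (1/2) * (|c * Real.sinh r| + |Real.log (Real.cosh r)|) := by
            gcongr
            exact abs_add_le _ _
        _ = (1/2) * (c * |Real.sinh r| + Real.log (Real.cosh r)) := by
            rw [abs_mul, abs_of_pos hc0, abs_of_nonneg hlog0]
        _ ≤ (1/2) * (c * (K * β) + (K * β) ^ 2) := by
            gcongr
            exact hlog.trans hs2
        _ = C2 * β ^ 2 := by rw [hC2, hc]; ring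
  have hcubeo : (fun β : ℝ => β ^ 3) =o[L] fun β => β ^ 2 := by
    have h1 : (fun β : ℝ => β) =o[L] fun _ => (1 : ℝ) :=
      (isLittleO_one_iff ℝ).mpr (tendsto_id.mono_left nhdsWithin_le_nhds)
    have h2 := h1.mul_isBigO (isBigO_refl (fun β : ℝ => β ^ 2) L)
    exact h2.congr (fun x => by ring) (fun x => by ring)
  constructor
  · refine (IsBigO.of_bound C1 ?_).trans_isLittleO hcubeo
    filter_upwards [key, hβpos] with β h hβ0
    calc ‖b β - (-(lam * β / 4))‖ ≤ C1 * β ^ 3 := h.1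
      _ = C1 * ‖β ^ 3‖ := by rw [Real.norm_eq_abs, abs_of_pos (by positivity)]
  · refine IsBigO.of_bound C2 ?_
    filter_upwards [key, hβpos] with β h hβ0
    calc ‖Vpot lam β (b β)‖ ≤ C2 * β ^ 2 := h.2
      _ = C2 * ‖β ^ 2‖ := by rw [Real.norm_eq_abs, abs_of_pos (by positivity)]
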